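/- Let A be a discrete connection form with D-type domain U, s : V → P a section over V ⊆ B, N ≥ 2, and m_• = (m₀,…,m_N) a discrete loop in B (m_N = m₀) such that (m₀,m_k,m_{k+1}) ∈ V''⁽³⁾ for all k = 0,…,N−1. Let q̄ ∈ π⁻¹(m₀), write q̄ = g₀ • s(m₀), and let q_• be the discrete horizontal lift of m_• starting at q̄ (with respect to h_A). Then HP(m_•,q̄) = g₀ · (∏_{k=1}^N A_s(m_{k-1},m_k)⁻¹) · g₀⁻¹ = ∏_{k=1}^{N−1} B_A(q₀,q_k,q_{k+1})⁻¹ (ordered products a₁·a₂·⋯·a_N). -/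
import Mathlib

private theorem tele_aux {G : Type*} [Group G] (f : ℕ → G) (n : ℕ) :
    ((List.range n).map (fun k => (f k)⁻¹ * f (k + 1))).prod = (f 0)⁻¹ * f n := by
  induction n with
  | zero => simp
  | succ n ih =>
      rw [List.range_succ, List.map_append, List.prod_append, ih]
      simp [mul_assoc]

/-- discrete holonomy phase formula.  For a discrete connection
form `A`, a section `s : V → P`, `N ≥ 2` and a discrete loop `m_•` with
`(m₀,m_k,m_{k+1}) ∈ V''⁽³⁾` for all `k`, if `q̄ = g₀ • s(m₀)` and `q_•` is the
discrete horizontal lift of `m_•` (with respect to `h_A`) starting at `q̄`, then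
`HP(m_•,q̄) = κ(q̄, q_N) = g₀ · (∏_{k=1}^N A_s(m_{k-1},m_k)⁻¹) · g₀⁻¹
            = ∏_{k=1}^{N−1} B_A(q₀,q_k,q_{k+1})⁻¹` (ordered products). -/
theorem discrete_holonomy_phase_formula
    {G : Type*} [Group G] {P : Type*} [MulAction G P] {B : Type*}
    (π : P → B)
    (hfree : ∀ (g : G) (q : P), g • q = q → g = 1)
    (hπ : ∀ q₀ q₁ : P, π q₀ = π q₁ ↔ ∃ g : G, g • q₀ = q₁)
    (κ : P → P → G)
    (hκ : ∀ q₀ q₁ : P, π q₀ = π q₁ → κ q₀ q₁ • q₀ = q₁)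
    (U : Set (P × P))
    (hUinv : ∀ q₀ q₁ : P, (q₀, q₁) ∈ U → ∀ g₀ g₁ : G, (g₀ • q₀, g₁ • q₁) ∈ U)
    (hUvert : ∀ q₀ q₁ : P, π q₀ = π q₁ → (q₀, q₁) ∈ U)
    (A : P → P → G)
    (hAid : ∀ q : P, A q q = 1)
    (hAequiv : ∀ q₀ q₁ : P, (q₀, q₁) ∈ U → ∀ g₀ g₁ : G,
      A (g₀ • q₀) (g₁ • q₁) = g₁ * A q₀ q₁ * g₀⁻¹)
    -- the curvature of `A`
    (BA : P → P → P → G)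
    (hBA : ∀ q₀ q₁ q₂ : P, BA q₀ q₁ q₂ = (A q₀ q₂)⁻¹ * A q₁ q₂ * A q₀ q₁)
    (V : Set B) (s : B → P) (hs : ∀ m ∈ V, π (s m) = m)
    (V'' : Set (B × B))
    (hV'' : V'' = {p : B × B | p.1 ∈ V ∧ p.2 ∈ V ∧ (s p.1, s p.2) ∈ U})
    -- a discrete loop `m_•` with all triples `(m₀, m_k, m_{k+1})` in `V''⁽³⁾`
    (N : ℕ) (hN : 2 ≤ N) (m : ℕ → B) (hloop : m N = m 0)
    (htr : ∀ k < N, ∀ x ∈ ({m 0, m k, m (k + 1)} : Set B),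
      ∀ y ∈ ({m 0, m k, m (k + 1)} : Set B), (x, y) ∈ V'')
    -- `q̄ = g₀ • s(m₀)` and `q_•` is the discrete horizontal lift of `m_•`
    -- (with respect to `h_A`) starting at `q̄`
    (g₀ : G) (qbar : P) (hqbar : qbar = g₀ • s (m 0))
    (q : ℕ → P) (hq0 : q 0 = qbar)
    (hlift : ∀ k < N, ∃ q' : P, π q' = m (k + 1) ∧ (q k, q') ∈ U ∧
      q (k + 1) = (A (q k) q')⁻¹ • q') :
    κ qbar (q N)
      = g₀ * (((List.range N).map
          (fun k => (A (s (m k)) (s (m (k + 1))))⁻¹)).prod) * g₀⁻¹ ∧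
    κ qbar (q N)
      = ((List.range (N - 1)).map
          (fun k => (BA (q 0) (q (k + 1)) (q (k + 2)))⁻¹)).prod := by
  set c : ℕ → G := fun k =>
    g₀ * ((List.range k).map (fun j => (A (s (m j)) (s (m (j + 1))))⁻¹)).prod with hc
  -- the horizontal lift in coordinates
  have hqc : ∀ k, k ≤ N → q k = c k • s (m k) := by
    intro k
    induction k with
    | zero => intro _; simp [hc, hq0, hqbar]
    | succ k ih =>
        intro hk
        have hkN : k < N := hk
        obtain ⟨q', hq'π, hq'U, hq'e⟩ := hlift k hkN
        have hmk1 : (m k, m (k + 1)) ∈ V'' :=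
          htr k hkN (m k) (by simp) (m (k + 1)) (by simp)
        rw [hV''] at hmk1
        obtain ⟨hmkV, hmk1V, hsU⟩ := hmk1
        have hπs : π (s (m (k + 1))) = m (k + 1) := hs _ hmk1V
        obtain ⟨h, hh⟩ := (hπ (s (m (k + 1))) q').mp (by rw [hπs, hq'π])
        have hqk := ih (le_of_lt hkN)
        have hAval : A (q k) q' = h * A (s (m k)) (s (m (k + 1))) * (c k)⁻¹ := by
          rw [hqk, ← hh]; exact hAequiv _ _ hsU _ _
        have hck : c (k + 1) = c k * (A (s (m k)) (s (m (k + 1))))⁻¹ := by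
          simp [hc, List.range_succ, mul_assoc]
        rw [hq'e, hAval, ← hh, hck, smul_smul]
        congr 1
        group
  -- uniqueness characterization of κ
  have hκuniq : ∀ g : G, g • qbar = q N → κ qbar (q N) = g := by
    intro g hg
    have hπeq : π qbar = π (q N) := (hπ _ _).mpr ⟨g, hg⟩
    have h1 := hκ _ _ hπeq
    have h2 : (g⁻¹ * κ qbar (q N)) • qbar = qbar := by
      rw [mul_smul, h1, ← hg, inv_smul_smul]
    have h3 := hfree _ _ h2
    exact (inv_mul_eq_one.mp h3).symm
  -- value of κ
  have hκval : κ qbar (q N) = c N * g₀⁻¹ := by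
    apply hκuniq
    rw [hqbar, hqc N le_rfl, hloop, smul_smul]
    congr 1
    group
  constructor
  · rw [hκval, hc]
  · -- horizontal steps are A-trivial
    have hA1 : ∀ k < N, A (q k) (q (k + 1)) = 1 := by
      intro k hk
      obtain ⟨q', hq'π, hq'U, hq'e⟩ := hlift k hk
      have heq := hAequiv _ _ hq'U 1 (A (q k) q')⁻¹
      rw [one_smul] at heq
      rw [hq'e, heq]
      group
    have hXN : A (q 0) (q N) = c N * g₀⁻¹ := by
      have hqN := hqc N le_rfl
      rw [hq0, hqbar, hqN, hloop, hAequiv _ _ (hUvert _ _ rfl) g₀ (c N), hAid]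
      group
    have hterm : ((List.range (N - 1)).map
          (fun k => (BA (q 0) (q (k + 1)) (q (k + 2)))⁻¹)).prod
        = ((List.range (N - 1)).map
          (fun k => (A (q 0) (q (k + 1)))⁻¹ * A (q 0) (q (k + 1 + 1)))).prod := by
      congr 1
      apply List.map_congr_left
      intro k hk
      have hk' : k < N - 1 := List.mem_range.mp hk
      rw [hBA, hA1 (k + 1) (by omega)]
      group
    rw [hterm, tele_aux (fun j => A (q 0) (q (j + 1))) (N - 1)]
    have hN1 : N - 1 + 1 = N := by omega
    rw [hN1, hXN, hA1 0 (by omega)]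
    rw [hκval]
    group
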